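/- Let J ⊆ I_n with the parabolic subgroup W_J finite. If some adjacency-free position λ is J^c-dominant, then every element of W^J is fully commutative. -/

import Mathlib

/-- An E-generalized Cartan matrix (E-GCM) on a finite index type `ι`. -/
structure EGCM (ι : Type*) [Fintype ι] where
  /-- the matrix of amplitudes -/
  M : ι → ι → ℝ
  diag : ∀ i, M i i = 2
  offDiag_nonpos : ∀ i j, i ≠ j → M i j ≤ 0
  zero_iff : ∀ i j, M i j = 0 ↔ M j i = 0
  prod_cond : ∀ i j, i ≠ j → M i j * M j i ≠ 0 →
    4 ≤ M i j * M j i ∨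
      ∃ k : ℕ, 3 ≤ k ∧ M i j * M j i = 4 * Real.cos (Real.pi / k) ^ 2

namespace EGCM

variable {ι : Type*} [Fintype ι]

/-- Adjacency in the E-GCM graph. -/
def Adj (E : EGCM ι) (i j : ι) : Prop := i ≠ j ∧ E.M i j ≠ 0

/-- The underlying simple graph of an E-GCM graph. -/
def graph (E : EGCM ι) : SimpleGraph ι where
  Adj i j := i ≠ j ∧ E.M i j ≠ 0
  symm := by
    constructor
    intro i j ⟨h1, h2⟩
    exact ⟨h1.symm, fun hz => h2 ((E.zero_iff j i).mp hz)⟩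
  loopless := by constructor; intro i ⟨h, _⟩; exact h rfl

/-- The result of firing node `i` from position `lam`. -/
def fire (E : EGCM ι) (lam : ι → ℝ) (i : ι) : ι → ℝ := fun j => lam j - E.M i j * lam i

/-- The position resulting from firing the nodes in the list `s` in order. -/
def fireList (E : EGCM ι) (lam : ι → ℝ) : List ι → (ι → ℝ)
  | [] => lam
  | i :: s => fireList E (E.fire lam i) s

/-- The firing sequence `s` is legal from position `lam`: at each step the
fired node carries a positive number. -/
def Legal (E : EGCM ι) (lam : ι → ℝ) : List ι → Prop
  | [] => True
  | i :: s => 0 < lam i ∧ Legal E (E.fire lam i) s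

/-- A position with no positive entries. -/
def Terminal (lam : ι → ℝ) : Prop := ∀ i, lam i ≤ 0

/-- `s` is a (convergent) game sequence from `lam`: a legal firing sequence whose
resulting position has no positive entries. -/
def IsGameSeq (E : EGCM ι) (lam : ι → ℝ) (s : List ι) : Prop :=
  E.Legal lam s ∧ Terminal (E.fireList lam s)

/-- The position after `k` steps of the infinite firing sequence `f`. -/
def posAt (E : EGCM ι) (lam : ι → ℝ) (f : ℕ → ι) : ℕ → (ι → ℝ)
  | 0 => lam
  | k + 1 => E.fire (posAt E lam f k) (f k)

/-- `f` is a divergent game sequence from `lam`: an infinite sequence of legal firings. -/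
def DivergentSeq (E : EGCM ι) (lam : ι → ℝ) (f : ℕ → ι) : Prop :=
  ∀ k, 0 < E.posAt lam f k (f k)

/-- A dominant position: all numbers nonnegative. -/
def Dominant (lam : ι → ℝ) : Prop := ∀ i, 0 ≤ lam i

/-- A strongly dominant position: all numbers positive. -/
def StronglyDominant (lam : ι → ℝ) : Prop := ∀ i, 0 < lam i

/-- The E-GCM graph is admissible if some nonzero dominant position has a
convergent game sequence. -/
def Admissible (E : EGCM ι) : Prop :=
  ∃ lam : ι → ℝ, Dominant lam ∧ lam ≠ 0 ∧ ∃ s : List ι, E.IsGameSeq lam s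

/-- The E-GCM graph is strongly admissible if every nonzero dominant position has a
convergent game sequence. -/
def StronglyAdmissible (E : EGCM ι) : Prop :=
  ∀ lam : ι → ℝ, Dominant lam → lam ≠ 0 → ∃ s : List ι, E.IsGameSeq lam s

/-- A position is adjacency-free if no position reachable from it by a legal firing
sequence (i.e. no intermediate position of a game sequence) has positive numbers at
two adjacent nodes. -/
def AdjacencyFree (E : EGCM ι) (lam : ι → ℝ) : Prop :=
  ∀ s : List ι, E.Legal lam s →
    ¬ ∃ i j, E.Adj i j ∧ 0 < E.fireList lam s i ∧ 0 < E.fireList lam s j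

/-- A `J`-complement-dominant position: zero exactly at the nodes of `J`, positive elsewhere. -/
def JcDominant (J : Set ι) (lam : ι → ℝ) : Prop :=
  (∀ j ∈ J, lam j = 0) ∧ ∀ i ∉ J, 0 < lam i

open Classical in
/-- The Coxeter exponent `m i j` attached to the E-GCM: `m i j = k` if
`M i j * M j i = 4 cos²(π/k)` with `k ≥ 2`, and `m i j = 0` (representing `∞`)
if `M i j * M j i ≥ 4`. -/
noncomputable def m (E : EGCM ι) (i j : ι) : ℕ :=
  if i = j then 1
  else if h : ∃ k : ℕ, 2 ≤ k ∧ E.M i j * E.M j i = 4 * Real.cos (Real.pi / k) ^ 2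
    then Nat.find h else 0

theorem m_symm (E : EGCM ι) (i j : ι) : E.m i j = E.m j i := by
  unfold m
  rcases eq_or_ne i j with rfl | hij
  · simp
  · rw [if_neg hij, if_neg (Ne.symm hij)]
    by_cases h : ∃ k : ℕ, 2 ≤ k ∧ E.M i j * E.M j i = 4 * Real.cos (Real.pi / k) ^ 2
    · have h' : ∃ k : ℕ, 2 ≤ k ∧ E.M j i * E.M i j = 4 * Real.cos (Real.pi / k) ^ 2 := by
        rw [mul_comm]; exact h
      rw [dif_pos h, dif_pos h']
      exact le_antisymm (Nat.find_mono fun n hn => by rwa [mul_comm (E.M i j)])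
        (Nat.find_mono fun n hn => by rwa [mul_comm (E.M j i)])
    · have h' : ¬ ∃ k : ℕ, 2 ≤ k ∧ E.M j i * E.M i j = 4 * Real.cos (Real.pi / k) ^ 2 := by
        rw [mul_comm]; exact h
      rw [dif_neg h, dif_neg h']

theorem m_offDiag (E : EGCM ι) (i j : ι) (h : i ≠ j) : E.m i j ≠ 1 := by
  classical
  unfold m
  rw [if_neg h]
  split
  · rename_i hex
    have := Nat.find_spec hex
    omega
  · omega

/-- The Coxeter matrix associated to the E-GCM. -/
noncomputable def cox (E : EGCM ι) : CoxeterMatrix ι where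
  M := fun i j => E.m i j
  isSymm := by
    ext i j
    exact E.m_symm j i
  diagonal := by intro i; simp [m]
  off_diagonal := fun i j h => E.m_offDiag i j h

/-- The reflection `S i` of the geometric representation:
`S i v = v − 2 B(α i, v) • α i` where `B (α i, α j) = M i j / 2`. -/
noncomputable def S [DecidableEq ι] (E : EGCM ι) (i : ι) : Module.End ℝ (ι → ℝ) :=
  LinearMap.id -
    LinearMap.smulRight
      ((∑ k, E.M i k • LinearMap.proj k : (ι → ℝ) →ₗ[ℝ] ℝ)) (Pi.single i 1)

end EGCM

section Roots

variable {ι : Type*} [Fintype ι] [DecidableEq ι]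
variable {W : Type*} [Group W]

/-- `α` is a root for the geometric representation `σ`. -/
def IsRoot (σ : W →* Module.End ℝ (ι → ℝ)) (α : ι → ℝ) : Prop :=
  ∃ (w : W) (i : ι), σ w (Pi.single i 1) = α

/-- `α` is a positive root. -/
def IsPosRoot (σ : W →* Module.End ℝ (ι → ℝ)) (α : ι → ℝ) : Prop :=
  IsRoot σ α ∧ ∀ i, 0 ≤ α i

/-- `α` is a negative root. -/
def IsNegRoot (σ : W →* Module.End ℝ (ι → ℝ)) (α : ι → ℝ) : Prop :=
  IsRoot σ α ∧ ∀ i, α i ≤ 0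

/-- `N_M(w)`: the set of positive roots sent to negative roots by `w`. -/
def NM (σ : W →* Module.End ℝ (ι → ℝ)) (w : W) : Set (ι → ℝ) :=
  {α | IsPosRoot σ α ∧ IsNegRoot σ (σ w α)}

/-- `𝔖_M(α)`: the positive roots which are real multiples of `α`. -/
def Sfrak (σ : W →* Module.End ℝ (ι → ℝ)) (α : ι → ℝ) : Set (ι → ℝ) :=
  {β | (∃ K : ℝ, β = K • α) ∧ IsPosRoot σ β}

end Roots

section Parabolic

variable {ι : Type*} {W : Type*} [Group W]

/-- The standard parabolic subgroup `W_J`. -/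
def parabolic {M : CoxeterMatrix ι} (cs : CoxeterSystem M W) (J : Set ι) : Subgroup W :=
  Subgroup.closure (cs.simple '' J)

/-- The set `W^J` of minimal coset representatives. -/
def minReps {M : CoxeterMatrix ι} (cs : CoxeterSystem M W) (J : Set ι) : Set W :=
  {w | ∀ j ∈ J, cs.length w < cs.length (w * cs.simple j)}

end Parabolic

namespace EGCM

variable {ι : Type*} [Fintype ι]

/-- The E-GCM subgraph induced on a subset `I` of the nodes. -/
def restrict (E : EGCM ι) (I : Finset ι) : EGCM {x // x ∈ I} where
  M i j := E.M i j
  diag i := E.diag i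
  offDiag_nonpos i j h := E.offDiag_nonpos i j (fun hc => h (Subtype.ext hc))
  zero_iff i j := E.zero_iff i j
  prod_cond i j h := E.prod_cond i j (fun hc => h (Subtype.ext hc))

/-- Adjacent nodes `i`, `j` are odd-neighborly if `m i j` is odd. -/
def OddNeighborly (E : EGCM ι) (i j : ι) : Prop := E.Adj i j ∧ Odd (E.m i j)

/-- The factor `K_{j i} = −(M j i) / (2 cos (π / m i j))` attached to an
odd-neighborly pair `(i, j)`. -/
noncomputable def Kfac (E : EGCM ι) (i j : ι) : ℝ :=
  -E.M j i / (2 * Real.cos (Real.pi / (E.m i j : ℝ)))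

/-- `Π_P` for the ON-path `P` given by a list of nodes: the product of the factors
`K` along consecutive pairs. -/
noncomputable def piON (E : EGCM ι) : List ι → ℝ
  | [] => 1
  | [_] => 1
  | a :: b :: t => piON E (b :: t) * E.Kfac a b

/-- `y` can be reached from `x` by a path of odd neighbors. -/
def ONReach (E : EGCM ι) (x y : ι) : Prop :=
  ∃ l : List ι, l.Chain' E.OddNeighborly ∧ l.head? = some x ∧ l.getLast? = some y

/-- The ON-connected component containing `x` is unital ON-cyclic: every ON-cycle
whose nodes lie in this component has `Π = 1`. -/
def UnitalONCyclicAt (E : EGCM ι) (x : ι) : Prop :=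
  ∀ l : List ι, l ≠ [] → l.Chain' E.OddNeighborly → (∀ y ∈ l, E.ONReach x y) →
    l.head? = l.getLast? → E.piON l = 1

/-- The E-GCM graph has an odd asymmetry: an odd-neighborly pair `i`, `j` with
`M i j ≠ M j i`. -/
def HasOddAsymmetry (E : EGCM ι) : Prop :=
  ∃ i j, E.OddNeighborly i j ∧ E.M i j ≠ E.M j i

end EGCM

section FullComm

variable {ι : Type*} [Fintype ι] {W : Type*} [Group W]

/-- An elementary simplification of commuting type: interchange adjacent letters
`x`, `y` with `m x y = 2`. -/
def CommMove (E : EGCM ι) (l l' : List ι) : Prop :=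
  ∃ (u v : List ι) (x y : ι), E.m x y = 2 ∧ l = u ++ x :: y :: v ∧ l' = u ++ y :: x :: v

/-- `w` is fully commutative: any reduced word for `w` can be obtained from any other
by a sequence of elementary simplifications of commuting type. -/
def FullyCommutative (E : EGCM ι) {W : Type*} [Group W] (cs : CoxeterSystem E.cox W)
    (w : W) : Prop :=
  ∀ l l' : List ι,
    cs.IsReduced l.reverse → cs.wordProd l.reverse = w →
    cs.IsReduced l'.reverse → cs.wordProd l'.reverse = w →
    Relation.ReflTransGen (CommMove E) l l'

end FullComm

/-- The Coxeter graph of a Coxeter matrix: an edge between `i ≠ j` iff `m i j ≠ 2`. -/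
def coxGraph {ι : Type*} (cm : CoxeterMatrix ι) : SimpleGraph ι where
  Adj i j := i ≠ j ∧ cm i j ≠ 2
  symm := by
    constructor
    intro i j ⟨h1, h2⟩
    exact ⟨h1.symm, by rwa [cm.symmetric j i]⟩
  loopless := by constructor; intro i ⟨h, _⟩; exact h rfl

/-- The E-GCM `E` has associated exponents given by the Coxeter matrix `cm`:
`M i j * M j i = 4 cos² (π / cm i j)` when `cm i j ≠ 0` and `M i j * M j i ≥ 4`
when `cm i j = 0` (representing `∞`), with `M i j = 0` iff `cm i j = 2`. -/
def Compat {ι : Type*} [Fintype ι] (E : EGCM ι) (cm : CoxeterMatrix ι) : Prop :=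
  ∀ i j : ι, i ≠ j →
    (E.M i j = 0 ↔ cm i j = 2) ∧
    ((cm i j = 0 ∧ 4 ≤ E.M i j * E.M j i) ∨
      (cm i j ≠ 0 ∧ E.M i j * E.M j i = 4 * Real.cos (Real.pi / (cm i j : ℝ)) ^ 2))

section AuxDev

open Real

namespace EGCM

variable {ι : Type*} [Fintype ι]

theorem m_eq_two_iff (E : EGCM ι) {i j : ι} (h : i ≠ j) : E.m i j = 2 ↔ E.M i j = 0 := by
  classical
  unfold m
  rw [if_neg h]
  constructor
  · intro h2
    split at h2
    · rename_i hex
      obtain ⟨h2le, heq⟩ := Nat.find_spec hex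
      rw [h2] at heq
      have : Real.cos (Real.pi / ((2:ℕ):ℝ)) = 0 := by
        norm_num [Real.cos_pi_div_two]
      rw [this] at heq
      simp at heq
      rcases heq with h' | h'
      · exact h'
      · exact (E.zero_iff i j).mpr h'
    · omega
  · intro hM
    have hMji : E.M j i = 0 := (E.zero_iff j i).mpr hM
    have hex : ∃ k : ℕ, 2 ≤ k ∧ E.M i j * E.M j i = 4 * Real.cos (Real.pi / k) ^ 2 := by
      refine ⟨2, le_refl 2, ?_⟩
      rw [hM, hMji]
      norm_num [Real.cos_pi_div_two]
    rw [dif_pos hex]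
    have h1 := (Nat.find_spec hex).1
    have h2 : Nat.find hex ≤ 2 := Nat.find_le ⟨le_refl 2, by
      rw [hM, hMji]; norm_num [Real.cos_pi_div_two]⟩
    omega

theorem m_cases (E : EGCM ι) {i j : ι} (h : i ≠ j) (hM : E.M i j ≠ 0) :
    E.m i j = 0 ∨ (3 ≤ E.m i j ∧
      E.M i j * E.M j i = 4 * Real.cos (Real.pi / (E.m i j : ℝ)) ^ 2) := by
  classical
  have hMji : E.M j i ≠ 0 := fun hz => hM ((E.zero_iff i j).mpr hz)
  have hprod : E.M i j * E.M j i ≠ 0 := mul_ne_zero hM hMji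
  unfold m
  rw [if_neg h]
  by_cases hex : ∃ k : ℕ, 2 ≤ k ∧ E.M i j * E.M j i = 4 * Real.cos (Real.pi / k) ^ 2
  · right
    rw [dif_pos hex]
    obtain ⟨h2le, heq⟩ := Nat.find_spec hex
    refine ⟨?_, heq⟩
    rcases Nat.lt_or_ge (Nat.find hex) 3 with h3 | h3
    · exfalso
      have hf2 : Nat.find hex = 2 := by omega
      rw [hf2] at heq
      have : Real.cos (Real.pi / ((2:ℕ):ℝ)) = 0 := by norm_num [Real.cos_pi_div_two]
      rw [this] at heq
      simp at heq
      rcases heq with h' | h'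
      · exact hM h'
      · exact hMji h'
    · exact h3
  · left
    rw [dif_neg hex]

theorem M_nonpos (E : EGCM ι) (i j : ι) : i ≠ j → E.M i j ≤ 0 := E.offDiag_nonpos i j

theorem cox_apply (E : EGCM ι) (i j : ι) : E.cox i j = E.m i j := rfl

variable [DecidableEq ι]

theorem S_apply (E : EGCM ι) (i : ι) (v : ι → ℝ) :
    E.S i v = v - (∑ k, E.M i k * v k) • (Pi.single i 1 : ι → ℝ) := by
  unfold S
  rw [LinearMap.sub_apply, LinearMap.id_apply, LinearMap.smulRight_apply]
  congr 2
  simp [LinearMap.sum_apply, smul_eq_mul]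

theorem S_single (E : EGCM ι) (i j : ι) :
    E.S i (Pi.single j 1) = Pi.single j 1 - E.M i j • (Pi.single i 1 : ι → ℝ) := by
  rw [S_apply]
  congr 2
  rw [Finset.sum_eq_single j]
  · simp
  · intro k _ hk
    simp [Pi.single_apply, hk]
  · simp

end EGCM

end AuxDev

namespace EGCM

variable {ι : Type*} [Fintype ι] [DecidableEq ι] (E : EGCM ι)

theorem rowSum_single (x y : ι) :
    ∑ k, E.M x k * (Pi.single y 1 : ι → ℝ) k = E.M x y := by
  rw [Finset.sum_eq_single y]
  · simp
  · intro k _ hk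
    simp [Pi.single_apply, hk]
  · simp

theorem rowSum_combo (x : ι) (v : ι → ℝ) (a b : ℝ) (y z : ι) :
    ∑ k, E.M x k * (v + a • (Pi.single y 1 : ι → ℝ) + b • (Pi.single z 1 : ι → ℝ)) k
      = (∑ k, E.M x k * v k) + a * E.M x y + b * E.M x z := by
  have h1 : ∀ k, E.M x k * (v + a • (Pi.single y 1 : ι → ℝ) + b • (Pi.single z 1 : ι → ℝ)) k
      = E.M x k * v k + a * (E.M x k * (Pi.single y 1 : ι → ℝ) k)
        + b * (E.M x k * (Pi.single z 1 : ι → ℝ) k) := by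
    intro k
    simp only [Pi.add_apply, Pi.smul_apply, smul_eq_mul]
    ring
  rw [Finset.sum_congr rfl (fun k _ => h1 k)]
  rw [Finset.sum_add_distrib, Finset.sum_add_distrib, ← Finset.mul_sum, ← Finset.mul_sum,
    rowSum_single, rowSum_single]

theorem S_combo (x y z : ι) (a b : ℝ) :
    E.S x (a • (Pi.single y 1 : ι → ℝ) + b • (Pi.single z 1 : ι → ℝ))
      = a • (Pi.single y 1 : ι → ℝ) + b • (Pi.single z 1 : ι → ℝ)
        - (a * E.M x y + b * E.M x z) • (Pi.single x 1 : ι → ℝ) := by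
  rw [S_apply]
  congr 2
  have := E.rowSum_combo x 0 a b y z
  simpa using this

section AbstractDihedral

variable (i j : ι) (hij : i ≠ j) (c q : ℝ) (hq : 0 < q)
  (hMij : E.M i j = -(2*c*q)) (hMji : E.M j i = -(2*c/q))

include hij hq hMij hMji in
/-- `S i` on the span of `eᵢ, eⱼ` in scaled coordinates `(A, B) ↦ A•eᵢ + (B/q)•eⱼ`. -/
theorem S_i_coords (A B : ℝ) :
    E.S i (A • (Pi.single i 1 : ι → ℝ) + (B/q) • (Pi.single j 1 : ι → ℝ))
      = (2*c*B - A) • (Pi.single i 1 : ι → ℝ) + (B/q) • (Pi.single j 1 : ι → ℝ) := by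
  rw [S_combo]
  rw [E.diag i, hMij]
  ext t
  simp only [Pi.add_apply, Pi.sub_apply, Pi.smul_apply, smul_eq_mul]
  have hq' : q ≠ 0 := ne_of_gt hq
  by_cases ht : t = i
  · subst ht
    simp [Pi.single_apply, hij]
    field_simp
    ring
  · simp [Pi.single_apply, ht]

include hij hq hMij hMji in
theorem S_j_coords (A B : ℝ) :
    E.S j (A • (Pi.single i 1 : ι → ℝ) + (B/q) • (Pi.single j 1 : ι → ℝ))
      = A • (Pi.single i 1 : ι → ℝ) + ((2*c*A - B)/q) • (Pi.single j 1 : ι → ℝ) := by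
  rw [S_combo]
  rw [E.diag j, hMji]
  ext t
  simp only [Pi.add_apply, Pi.sub_apply, Pi.smul_apply, smul_eq_mul]
  have hq' : q ≠ 0 := ne_of_gt hq
  by_cases ht : t = j
  · subst ht
    simp [Pi.single_apply, Ne.symm hij]
    field_simp
    ring
  · simp [Pi.single_apply, ht]

variable (u : ℕ → ℝ) (hu0 : u 0 = 0) (hu1 : u 1 = 1)
  (hurec : ∀ k, u (k+2) = 2*c*u (k+1) - u k)

include hij hq hMij hMji hu0 hu1 hurec in
theorem pow_apply_single_i (n : ℕ) :
    ((E.S i * E.S j)^n) (Pi.single i 1 : ι → ℝ)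
      = u (2*n+1) • (Pi.single i 1 : ι → ℝ) + (u (2*n) / q) • (Pi.single j 1 : ι → ℝ) := by
  induction n with
  | zero =>
    simp [hu0, hu1]
  | succ n ih =>
    rw [pow_succ', Module.End.mul_apply, ih, Module.End.mul_apply]
    rw [E.S_j_coords i j hij c q hq hMij hMji (u (2*n+1)) (u (2*n))]
    have h1 : 2*c*u (2*n+1) - u (2*n) = u (2*n+2) := by rw [hurec (2*n)]
    rw [h1]
    rw [E.S_i_coords i j hij c q hq hMij hMji (u (2*n+1)) (u (2*n+2))]
    have h2 : 2*c*u (2*n+2) - u (2*n+1) = u (2*n+3) := by rw [hurec (2*n+1)]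
    rw [h2]
    have e1 : 2*(n+1)+1 = 2*n+3 := by ring
    have e2 : 2*(n+1) = 2*n+2 := by ring
    rw [e1, e2]

include hij hq hMij hMji hu0 hu1 hurec in
theorem pow_apply_single_j (n : ℕ) :
    ((E.S i * E.S j)^n) (Pi.single j 1 : ι → ℝ)
      = (-(q * u (2*n))) • (Pi.single i 1 : ι → ℝ)
        + ((-(q * (2*c*u (2*n) - u (2*n+1))))/q) • (Pi.single j 1 : ι → ℝ) := by
  induction n with
  | zero =>
    have hq' : q ≠ 0 := ne_of_gt hq
    simp [hu0, hu1]
    ext t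
    by_cases ht : t = j <;> simp [Pi.single_apply, ht, hq']
  | succ n ih =>
    rw [pow_succ', Module.End.mul_apply, ih, Module.End.mul_apply]
    rw [E.S_j_coords i j hij c q hq hMij hMji _ _]
    have h1 : 2*c*(-(q * u (2*n))) - (-(q * (2*c*u (2*n) - u (2*n+1))))
        = -(q * u (2*n+1)) := by ring
    rw [h1]
    rw [E.S_i_coords i j hij c q hq hMij hMji _ _]
    have h2 : 2*c*(-(q * u (2*n+1))) - (-(q * u (2*n)))
        = -(q * u (2*n+2)) := by
      rw [hurec (2*n)]; ring
    rw [h2]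
    have e2 : 2*(n+1) = 2*n+2 := by ring
    rw [e2]
    have h3 : 2*n+2+1 = (2*n+1)+2 := by omega
    rw [h3, hurec (2*n+1)]
    congr 2
    ring

end AbstractDihedral

theorem S_fixed {x : ι} {v : ι → ℝ} (h : ∑ k, E.M x k * v k = 0) : E.S x v = v := by
  rw [S_apply, h]
  simp

theorem pow_fixed {i j : ι} {v : ι → ℝ} (h1 : E.S i v = v) (h2 : E.S j v = v) (n : ℕ) :
    ((E.S i * E.S j)^n) v = v := by
  induction n with
  | zero => simp
  | succ n ih => rw [pow_succ', Module.End.mul_apply, Module.End.mul_apply, ih, h2, h1]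

end EGCM

namespace EGCM

variable {ι : Type*} [Fintype ι] [DecidableEq ι] (E : EGCM ι)

theorem rowSum_combo' (x : ι) (v : ι → ℝ) (a b : ℝ) (y z : ι) :
    ∑ k, E.M x k * (v - a • (Pi.single y 1 : ι → ℝ) - b • (Pi.single z 1 : ι → ℝ)) k
      = (∑ k, E.M x k * v k) - a * E.M x y - b * E.M x z := by
  have hv : v - a • (Pi.single y 1 : ι → ℝ) - b • (Pi.single z 1 : ι → ℝ)
      = v + (-a) • (Pi.single y 1 : ι → ℝ) + (-b) • (Pi.single z 1 : ι → ℝ) := by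
    ext t; simp; ring
  rw [hv, rowSum_combo]
  ring

theorem S_invol (x : ι) : E.S x * E.S x = 1 := by
  apply LinearMap.ext
  intro v
  rw [Module.End.mul_apply, Module.End.one_apply]
  set L := ∑ k, E.M x k * v k with hL
  have h1 : E.S x v = v - L • (Pi.single x 1 : ι → ℝ) - (0:ℝ) • (Pi.single x 1 : ι → ℝ) := by
    rw [S_apply, ← hL]
    ext t
    simp only [Pi.sub_apply, Pi.smul_apply, smul_eq_mul]
    ring
  rw [h1, S_apply, rowSum_combo', E.diag x, ← hL]
  ext t
  simp only [Pi.sub_apply, Pi.smul_apply, smul_eq_mul]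
  ring

theorem SiSj_apply {i j : ι} (hM0 : E.M i j = 0) (hM0' : E.M j i = 0) (v : ι → ℝ) :
    E.S i (E.S j v) = v - (∑ k, E.M i k * v k) • (Pi.single i 1 : ι → ℝ)
      - (∑ k, E.M j k * v k) • (Pi.single j 1 : ι → ℝ) := by
  have h1 : E.S j v = v - (∑ k, E.M j k * v k) • (Pi.single j 1 : ι → ℝ)
      - (0:ℝ) • (Pi.single i 1 : ι → ℝ) := by
    rw [S_apply]; ext t; simp
  rw [h1]
  rw [S_apply, rowSum_combo', hM0, E.diag i]
  ext t
  simp only [Pi.sub_apply, Pi.smul_apply, smul_eq_mul]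
  ring

theorem comm_sq {i j : ι} (hM0 : E.M i j = 0) (hM0' : E.M j i = 0) :
    (E.S i * E.S j)^2 = 1 := by
  apply LinearMap.ext
  intro v
  rw [pow_two, Module.End.mul_apply, Module.End.mul_apply, Module.End.mul_apply,
    Module.End.one_apply]
  rw [E.SiSj_apply hM0 hM0' v]
  set L1 := ∑ k, E.M i k * v k with hL1
  set L2 := ∑ k, E.M j k * v k with hL2
  have hri : ∑ k, E.M i k * (v - L1 • (Pi.single i 1 : ι → ℝ)
      - L2 • (Pi.single j 1 : ι → ℝ)) k = -L1 := by
    rw [rowSum_combo', hM0, E.diag i, ← hL1]; ring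
  have hrj : ∑ k, E.M j k * (v - L1 • (Pi.single i 1 : ι → ℝ)
      - L2 • (Pi.single j 1 : ι → ℝ)) k = -L2 := by
    rw [rowSum_combo', hM0', E.diag j, ← hL2]; ring
  rw [E.SiSj_apply hM0 hM0'
    (v - L1 • (Pi.single i 1 : ι → ℝ) - L2 • (Pi.single j 1 : ι → ℝ))]
  rw [hri, hrj]
  ext t
  simp only [Pi.sub_apply, Pi.smul_apply, smul_eq_mul]
  ring

theorem dihedral_pow (i j : ι) (hij : i ≠ j) (hMne : E.M i j ≠ 0) (hm3 : 3 ≤ E.m i j)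
    (heq : E.M i j * E.M j i = 4 * Real.cos (Real.pi / (E.m i j : ℝ)) ^ 2) :
    (E.S i * E.S j) ^ (E.m i j) = 1 := by
  set m := E.m i j with hmdef
  set θ := Real.pi / (m:ℝ) with hθdef
  have hmR : (3:ℝ) ≤ (m:ℝ) := by exact_mod_cast hm3
  have hθpos : 0 < θ := div_pos Real.pi_pos (by linarith)
  have hθle : θ ≤ Real.pi / 3 := by
    rw [hθdef]
    apply div_le_div_of_nonneg_left Real.pi_pos.le (by norm_num) hmR
  have hθlt : θ < Real.pi / 2 := lt_of_le_of_lt hθle (by linarith [Real.pi_pos])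
  set c := Real.cos θ with hcdef
  have hc0 : 0 < c := Real.cos_pos_of_mem_Ioo ⟨by linarith, hθlt⟩
  have hsθ : 0 < Real.sin θ := Real.sin_pos_of_pos_of_lt_pi hθpos
    (by linarith [Real.pi_pos])
  have hc1 : c < 1 := by nlinarith [Real.sin_sq_add_cos_sq θ]
  have hMneg : E.M i j < 0 := lt_of_le_of_ne (E.offDiag_nonpos i j hij) hMne
  set q := -E.M i j / (2*c) with hqdef
  have hq : 0 < q := div_pos (by linarith) (by linarith)
  have hMij' : E.M i j = -(2*c*q) := by
    rw [hqdef]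
    field_simp
  have hMM : E.M i j * E.M j i = 4*c^2 := heq
  have hMji' : E.M j i = -(2*c/q) := by
    have h2 : E.M j i = 4*c^2 / E.M i j := by
      rw [eq_div_iff hMne, mul_comm]
      exact hMM
    rw [h2, hqdef]
    field_simp
    ring
  set u : ℕ → ℝ := fun k => Real.sin ((k:ℝ)*θ) / Real.sin θ with hudef
  have hu0 : u 0 = 0 := by simp [hudef]
  have hu1 : u 1 = 1 := by
    simp only [hudef, Nat.cast_one, one_mul]
    exact div_self (ne_of_gt hsθ)
  have hurec : ∀ k, u (k+2) = 2*c*u (k+1) - u k := by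
    intro k
    have key : Real.sin (((k:ℝ)+2)*θ) = 2*c*Real.sin (((k:ℝ)+1)*θ) - Real.sin ((k:ℝ)*θ) := by
      have h1 : ((k:ℝ)+2)*θ = ((k:ℝ)+1)*θ + θ := by ring
      have h2 : (k:ℝ)*θ = ((k:ℝ)+1)*θ - θ := by ring
      rw [h1, h2, Real.sin_add, Real.sin_sub, hcdef]
      ring
    simp only [hudef]
    push_cast
    rw [key]
    ring
  have hm0 : (m:ℝ) ≠ 0 := by linarith
  have hu2m : u (2*m) = 0 := by
    have h1 : ((2*m:ℕ):ℝ)*θ = 2*Real.pi := by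
      push_cast
      rw [hθdef]
      field_simp
    simp only [hudef, h1, Real.sin_two_pi, zero_div]
  have hu2m1 : u (2*m+1) = 1 := by
    have h1 : ((2*m+1:ℕ):ℝ)*θ = θ + 2*Real.pi := by
      push_cast
      rw [hθdef]
      field_simp
      ring
    simp only [hudef, h1, Real.sin_add_two_pi]
    exact div_self (ne_of_gt hsθ)
  apply LinearMap.ext
  intro v
  set L1 := ∑ k, E.M i k * v k with hL1
  set L2 := ∑ k, E.M j k * v k with hL2
  have hdet : (4 - 4*c^2) ≠ 0 := by nlinarith
  set a := (2*L1 - E.M i j * L2) / (4 - 4*c^2) with hadef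
  set b := (2*L2 - E.M j i * L1) / (4 - 4*c^2) with hbdef
  set w := v - a • (Pi.single i 1 : ι → ℝ) - b • (Pi.single j 1 : ι → ℝ) with hwdef
  have hrow_i : ∑ k, E.M i k * w k = 0 := by
    rw [hwdef, rowSum_combo', E.diag i, ← hL1, hadef, hbdef]
    linear_combination (L1 * (4 - 4*c^2)⁻¹) * hMM - L1 * (mul_inv_cancel₀ hdet)
  have hrow_j : ∑ k, E.M j k * w k = 0 := by
    rw [hwdef, rowSum_combo', E.diag j, ← hL2, hadef, hbdef]
    linear_combination (L2 * (4 - 4*c^2)⁻¹) * hMM - L2 * (mul_inv_cancel₀ hdet)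
  have hfix : ((E.S i * E.S j)^m) w = w :=
    E.pow_fixed (E.S_fixed hrow_i) (E.S_fixed hrow_j) m
  have hv : v = w + a • (Pi.single i 1 : ι → ℝ) + b • (Pi.single j 1 : ι → ℝ) := by
    rw [hwdef]
    ext t
    simp only [Pi.add_apply, Pi.sub_apply, Pi.smul_apply, smul_eq_mul]
    ring
  rw [Module.End.one_apply]
  conv_lhs => rw [hv]
  rw [map_add, map_add, map_smul, map_smul, hfix]
  rw [E.pow_apply_single_i i j hij c q hq hMij' hMji' u hu0 hu1 hurec m]
  rw [E.pow_apply_single_j i j hij c q hq hMij' hMji' u hu0 hu1 hurec m]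
  rw [hu2m, hu2m1]
  rw [hv]
  ext t
  have hq' : q ≠ 0 := ne_of_gt hq
  simp only [Pi.add_apply, Pi.smul_apply, Pi.sub_apply, smul_eq_mul]
  field_simp
  ring

theorem isLiftable : CoxeterMatrix.IsLiftable E.cox (fun x => E.S x) := by
  intro i j
  show (E.S i * E.S j) ^ (E.m i j) = 1
  rcases eq_or_ne i j with rfl | hij
  · have h1 : E.m i i = 1 := by simp [m]
    rw [h1, pow_one]
    exact E.S_invol i
  · by_cases hM0 : E.M i j = 0
    · have hm2 : E.m i j = 2 := (E.m_eq_two_iff hij).mpr hM0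
      rw [hm2]
      exact E.comm_sq hM0 ((E.zero_iff j i).mpr hM0)
    · rcases E.m_cases hij hM0 with h0 | ⟨hm3, heq⟩
      · rw [h0, pow_zero]
      · exact E.dihedral_pow i j hij hM0 hm3 heq

variable {W : Type*} [Group W]

/-- The geometric representation of the Coxeter group on `ι → ℝ` by the reflections `S`. -/
noncomputable def tau (cs : CoxeterSystem E.cox W) : W →* Module.End ℝ (ι → ℝ) :=
  cs.lift ⟨fun x => E.S x, E.isLiftable⟩

@[simp] theorem tau_simple (cs : CoxeterSystem E.cox W) (i : ι) :
    E.tau cs (cs.simple i) = E.S i :=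
  cs.lift_apply_simple E.isLiftable i

end EGCM

namespace EGCM

open CoxeterSystem

variable {ι : Type*} [Fintype ι] [DecidableEq ι] (E : EGCM ι)
variable {W : Type*} [Group W] (cs : CoxeterSystem E.cox W)

/-- The Chebyshev-like sequence for parameter `c`. -/
noncomputable def chebU (c : ℝ) : ℕ → ℝ
  | 0 => 0
  | 1 => 1
  | (n+2) => 2*c*chebU c (n+1) - chebU c n

theorem chebU_nonneg_mono {c : ℝ} (hc : 1 ≤ c) :
    ∀ n, 0 ≤ chebU c n ∧ chebU c n ≤ chebU c (n+1) := by
  intro n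
  induction n with
  | zero => simp [chebU]
  | succ n ih =>
    obtain ⟨h0, hmono⟩ := ih
    have h1 : 0 ≤ chebU c (n+1) := le_trans h0 hmono
    constructor
    · exact h1
    · show chebU c (n+1) ≤ 2*c*chebU c (n+1) - chebU c n
      nlinarith

section AltCoords

variable (i j : ι) (hij : i ≠ j) (c q : ℝ) (hq : 0 < q)
  (hMij : E.M i j = -(2*c*q)) (hMji : E.M j i = -(2*c/q))
  (u : ℕ → ℝ) (hu0 : u 0 = 0) (hu1 : u 1 = 1)
  (hurec : ∀ k, u (k+2) = 2*c*u (k+1) - u k)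

include hij hq hMij hMji hu0 hu1 hurec in
theorem tau_alt_coords (r : ℕ) :
    E.tau cs (cs.wordProd (alternatingWord i j r)) (Pi.single i 1 : ι → ℝ)
      = (if Even r then u (r+1) else u r) • (Pi.single i 1 : ι → ℝ)
        + ((if Even r then u r else u (r+1))/q) • (Pi.single j 1 : ι → ℝ) := by
  induction r with
  | zero =>
    simp only [alternatingWord, wordProd_nil, map_one, Module.End.one_apply, if_pos (Even.zero),
      hu0, hu1]
    ext t
    simp
  | succ r ih =>
    rw [alternatingWord_succ', wordProd_cons, map_mul, Module.End.mul_apply, ih]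
    rcases Nat.even_or_odd r with hr | hr
    · have hodd : ¬ Even (r+1) := by simp [Nat.even_add_one, hr]
      simp only [if_pos hr, if_neg hodd]
      simp only [tau_simple]
      rw [E.S_j_coords i j hij c q hq hMij hMji (u (r+1)) (u r)]
      rw [show 2*c*u (r+1) - u r = u (r+2) from (hurec r).symm]
    · have hne : ¬ Even r := Nat.not_even_iff_odd.mpr hr
      have heven : Even (r+1) := Nat.even_add_one.mpr hne
      simp only [if_neg hne, if_pos heven]
      simp only [tau_simple]
      rw [E.S_i_coords i j hij c q hq hMij hMji (u r) (u (r+1))]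
      rw [show 2*c*u (r+1) - u r = u (r+2) from (hurec r).symm]

end AltCoords

/-- positivity of the coefficients of alternating words acting on a simple root. -/
theorem alt_pos (i j : ι) (hij : i ≠ j) (r : ℕ)
    (hr : E.m i j = 0 ∨ r < E.m i j) :
    ∃ a b : ℝ, 0 ≤ a ∧ 0 ≤ b ∧
      E.tau cs (cs.wordProd (alternatingWord i j r)) (Pi.single i 1 : ι → ℝ)
        = a • (Pi.single i 1 : ι → ℝ) + b • (Pi.single j 1 : ι → ℝ) := by
  match r with
  | 0 =>
    refine ⟨1, 0, by norm_num, le_refl 0, ?_⟩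
    simp only [alternatingWord, wordProd_nil, map_one, Module.End.one_apply]
    ext t
    simp
  | 1 =>
    refine ⟨1, -E.M j i, by norm_num, by linarith [E.offDiag_nonpos j i (Ne.symm hij)], ?_⟩
    have h1 : alternatingWord i j 1 = [j] := rfl
    rw [h1, wordProd_singleton, tau_simple, S_single]
    ext t
    simp only [Pi.add_apply, Pi.sub_apply, Pi.smul_apply, smul_eq_mul]
    ring
  | (r+2) =>
    -- here E.m i j = 0 or r + 2 < E.m i j; in both cases E.M i j ≠ 0
    have hMne : E.M i j ≠ 0 := by
      intro h0
      have h2 : E.m i j = 2 := (E.m_eq_two_iff hij).mpr h0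
      rcases hr with h | h <;> omega
    have hMneg : E.M i j < 0 := lt_of_le_of_ne (E.offDiag_nonpos i j hij) hMne
    rcases E.m_cases hij hMne with h0 | ⟨hm3, heq⟩
    · -- infinite case : c ≥ 1
      have hMjine : E.M j i ≠ 0 := fun hz => hMne ((E.zero_iff i j).mpr hz)
      have hMjneg : E.M j i < 0 := lt_of_le_of_ne (E.offDiag_nonpos j i (Ne.symm hij)) hMjine
      have hprod4 : 4 ≤ E.M i j * E.M j i := by
        rcases E.prod_cond i j hij (mul_ne_zero hMne hMjine) with h | ⟨k, hk3, hkeq⟩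
        · exact h
        · exfalso
          -- if the product is 4cos²(π/k), then m i j ≠ 0
          have : ∃ k' : ℕ, 2 ≤ k' ∧ E.M i j * E.M j i = 4 * Real.cos (Real.pi / k') ^ 2 :=
            ⟨k, by omega, hkeq⟩
          unfold m at h0
          rw [if_neg hij, dif_pos this] at h0
          have := (Nat.find_spec this).1
          omega
      set c := Real.sqrt (E.M i j * E.M j i) / 2 with hcdef
      have hprodpos : (0:ℝ) < E.M i j * E.M j i := by nlinarith
      have hc1 : 1 ≤ c := by
        rw [hcdef]
        rw [le_div_iff₀ (by norm_num : (0:ℝ) < 2)]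
        have : (2:ℝ) = Real.sqrt 4 := by
          rw [show (4:ℝ) = 2^2 by norm_num, Real.sqrt_sq (by norm_num : (0:ℝ) ≤ 2)]
        rw [this, one_mul]
        exact Real.sqrt_le_sqrt hprod4
      have hc0 : 0 < c := by linarith
      set q := -E.M i j / (2*c) with hqdef
      have hq : 0 < q := div_pos (by linarith) (by linarith)
      have hsq : Real.sqrt (E.M i j * E.M j i) ^ 2 = E.M i j * E.M j i :=
        Real.sq_sqrt (le_of_lt hprodpos)
      have hMij' : E.M i j = -(2*c*q) := by
        rw [hqdef]
        field_simp
      have hMji' : E.M j i = -(2*c/q) := by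
        have h4c : 4*c^2 = E.M i j * E.M j i := by
          rw [hcdef]
          field_simp
          linarith [hsq]
        have h2 : E.M j i = 4*c^2 / E.M i j := by
          rw [eq_div_iff hMne, h4c, mul_comm]
        rw [h2, hqdef]
        field_simp
        ring
      have hch := chebU_nonneg_mono hc1
      have hrec : ∀ k, chebU c (k+2) = 2*c*chebU c (k+1) - chebU c k := fun k => rfl
      have := E.tau_alt_coords cs i j hij c q hq hMij' hMji' (chebU c) rfl rfl hrec (r+2)
      refine ⟨_, _, ?_, ?_, this⟩
      · split <;> exact (hch _).1
      · apply div_nonneg _ (le_of_lt hq)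
        split <;> exact (hch _).1
    · -- finite case, r + 2 < m
      have hrm : r + 2 < E.m i j := by
        rcases hr with h | h
        · omega
        · exact h
      set m' := E.m i j with hmdef
      set θ := Real.pi / (m':ℝ) with hθdef
      have hmR : (3:ℝ) ≤ (m':ℝ) := by exact_mod_cast hm3
      have hθpos : 0 < θ := div_pos Real.pi_pos (by linarith)
      have hθle : θ ≤ Real.pi / 3 := by
        rw [hθdef]
        apply div_le_div_of_nonneg_left Real.pi_pos.le (by norm_num) hmR
      have hθlt : θ < Real.pi / 2 := lt_of_le_of_lt hθle (by linarith [Real.pi_pos])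
      set c := Real.cos θ with hcdef
      have hc0 : 0 < c := Real.cos_pos_of_mem_Ioo ⟨by linarith, hθlt⟩
      have hsθ : 0 < Real.sin θ := Real.sin_pos_of_pos_of_lt_pi hθpos
        (by linarith [Real.pi_pos])
      set q := -E.M i j / (2*c) with hqdef
      have hq : 0 < q := div_pos (by linarith) (by linarith)
      have hMij' : E.M i j = -(2*c*q) := by
        rw [hqdef]
        field_simp
      have hMM : E.M i j * E.M j i = 4*c^2 := heq
      have hMji' : E.M j i = -(2*c/q) := by
        have h2 : E.M j i = 4*c^2 / E.M i j := by
          rw [eq_div_iff hMne, mul_comm]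
          exact hMM
        rw [h2, hqdef]
        field_simp
        ring
      set u : ℕ → ℝ := fun k => Real.sin ((k:ℝ)*θ) / Real.sin θ with hudef
      have hu0 : u 0 = 0 := by simp [hudef]
      have hu1 : u 1 = 1 := by
        simp only [hudef, Nat.cast_one, one_mul]
        exact div_self (ne_of_gt hsθ)
      have hurec : ∀ k, u (k+2) = 2*c*u (k+1) - u k := by
        intro k
        have key : Real.sin (((k:ℝ)+2)*θ) = 2*c*Real.sin (((k:ℝ)+1)*θ)
            - Real.sin ((k:ℝ)*θ) := by
          have h1 : ((k:ℝ)+2)*θ = ((k:ℝ)+1)*θ + θ := by ring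
          have h2 : (k:ℝ)*θ = ((k:ℝ)+1)*θ - θ := by ring
          rw [h1, h2, Real.sin_add, Real.sin_sub, hcdef]
          ring
        simp only [hudef]
        push_cast
        rw [key]
        ring
      have hunn : ∀ k, k ≤ m' → 0 ≤ u k := by
        intro k hk
        rw [hudef]
        apply div_nonneg _ (le_of_lt hsθ)
        apply Real.sin_nonneg_of_nonneg_of_le_pi
        · positivity
        · rw [hθdef]
          rw [div_le_iff₀ (by linarith : (0:ℝ) < (m':ℝ))] at *
          calc (k:ℝ) * (Real.pi / m') = Real.pi * ((k:ℝ)/(m':ℝ)) := by ring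
            _ ≤ Real.pi * 1 := by
                apply mul_le_mul_of_nonneg_left _ Real.pi_pos.le
                rw [div_le_one (by linarith : (0:ℝ) < (m':ℝ))]
                exact_mod_cast hk
            _ = Real.pi := mul_one _
      have := E.tau_alt_coords cs i j hij c q hq hMij' hMji' u hu0 hu1 hurec (r+2)
      refine ⟨_, _, ?_, ?_, this⟩
      · split
        · exact hunn _ (by omega)
        · exact hunn _ (by omega)
      · apply div_nonneg _ (le_of_lt hq)
        split
        · exact hunn _ (by omega)
        · exact hunn _ (by omega)

end EGCM

namespace EGCM

open CoxeterSystem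

variable {ι : Type*} [Fintype ι] [DecidableEq ι] (E : EGCM ι)
variable {W : Type*} [Group W] (cs : CoxeterSystem E.cox W)

theorem strip (i j : ι) (w : W) : ∃ (v : W) (d : List ι),
    (∀ x ∈ d, x = i ∨ x = j) ∧ w = v * cs.wordProd d ∧
    cs.length w = cs.length v + d.length ∧
    ¬cs.IsRightDescent v i ∧ ¬cs.IsRightDescent v j := by
  have key : ∀ n (w : W), cs.length w ≤ n → ∃ (v : W) (d : List ι),
      (∀ x ∈ d, x = i ∨ x = j) ∧ w = v * cs.wordProd d ∧
      cs.length w = cs.length v + d.length ∧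
      ¬cs.IsRightDescent v i ∧ ¬cs.IsRightDescent v j := by
    intro n
    induction n with
    | zero =>
      intro w hw
      have hw1 : w = 1 := cs.length_eq_zero_iff.mp (Nat.le_zero.mp hw)
      subst hw1
      exact ⟨1, [], by simp, by simp, by simp, cs.not_isRightDescent_one i,
        cs.not_isRightDescent_one j⟩
    | succ n ih =>
      intro w hw
      have step : ∀ x : ι, (x = i ∨ x = j) → cs.IsRightDescent w x →
          ∃ (v : W) (d : List ι),
          (∀ y ∈ d, y = i ∨ y = j) ∧ w = v * cs.wordProd d ∧
          cs.length w = cs.length v + d.length ∧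
          ¬cs.IsRightDescent v i ∧ ¬cs.IsRightDescent v j := by
        intro x hxij hx
        have hlen : cs.length (w * cs.simple x) + 1 = cs.length w :=
          cs.isRightDescent_iff.mp hx
        obtain ⟨v, d, hd, hvd, hl, hvi, hvj⟩ := ih (w * cs.simple x) (by omega)
        refine ⟨v, d ++ [x], ?_, ?_, ?_, hvi, hvj⟩
        · intro y hy
          rcases List.mem_append.mp hy with h | h
          · exact hd y h
          · simp at h
            subst h
            exact hxij
        · rw [wordProd_append, wordProd_singleton, ← mul_assoc, ← hvd,
            simple_mul_simple_cancel_right]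
        · rw [List.length_append, List.length_singleton]
          omega
      by_cases hi : cs.IsRightDescent w i
      · exact step i (Or.inl rfl) hi
      · by_cases hj : cs.IsRightDescent w j
        · exact step j (Or.inr rfl) hj
        · exact ⟨w, [], by simp, by simp, by simp, hi, hj⟩
  exact key (cs.length w) w le_rfl

theorem mul_alt (i j x : ι) (hx : x = i ∨ x = j) (r : ℕ) :
    ∃ r', r' ≤ r + 1 ∧
      (cs.simple x * cs.wordProd (alternatingWord i j r)
          = cs.wordProd (alternatingWord i j r')
        ∨ cs.simple x * cs.wordProd (alternatingWord i j r)
          = cs.wordProd (alternatingWord j i r')) := by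
  match r with
  | 0 =>
    rcases hx with rfl | rfl
    · refine ⟨1, by omega, Or.inr ?_⟩
      have h1 : alternatingWord x j 0 = ([] : List ι) := rfl
      have h2 : alternatingWord j x 1 = [x] := rfl
      rw [h1, h2, wordProd_nil, wordProd_singleton, mul_one]
    · refine ⟨1, by omega, Or.inl ?_⟩
      have h1 : alternatingWord i x 0 = ([] : List ι) := rfl
      have h2 : alternatingWord i x 1 = [x] := rfl
      rw [h1, h2, wordProd_nil, wordProd_singleton, mul_one]
  | (r+1) =>
    rcases Nat.even_or_odd r with hr | hr
    · have hfront : alternatingWord i j (r+1) = j :: alternatingWord i j r := by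
        rw [alternatingWord_succ', if_pos hr]
      rcases hx with rfl | rfl
      · -- x = i, new front of alt (r+2)
        refine ⟨r+2, by omega, Or.inl ?_⟩
        have hodd : ¬ Even (r+1) := by simp [Nat.even_add_one, hr]
        have hfront2 : alternatingWord x j (r+2) = x :: alternatingWord x j (r+1) := by
          rw [alternatingWord_succ', if_neg hodd]
        rw [hfront2, wordProd_cons]
      · -- x = j cancels
        refine ⟨r, by omega, Or.inl ?_⟩
        rw [hfront, wordProd_cons, simple_mul_simple_cancel_left]
    · have hfront : alternatingWord i j (r+1) = i :: alternatingWord i j r := by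
        rw [alternatingWord_succ', if_neg (Nat.not_even_iff_odd.mpr hr)]
      rcases hx with rfl | rfl
      · -- x = i cancels
        refine ⟨r, by omega, Or.inl ?_⟩
        rw [hfront, wordProd_cons, simple_mul_simple_cancel_left]
      · -- x = j is the new front
        refine ⟨r+2, by omega, Or.inl ?_⟩
        have heven : Even (r+1) := Nat.even_add_one.mpr (Nat.not_even_iff_odd.mpr hr)
        have hfront2 : alternatingWord i x (r+2) = x :: alternatingWord i x (r+1) := by
          rw [alternatingWord_succ', if_pos heven]
        rw [hfront2, wordProd_cons]

theorem dihedral_reduce (i j : ι) (d : List ι) (hd : ∀ x ∈ d, x = i ∨ x = j) :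
    ∃ r, r ≤ d.length ∧
      (cs.wordProd d = cs.wordProd (alternatingWord i j r)
        ∨ cs.wordProd d = cs.wordProd (alternatingWord j i r)) := by
  induction d with
  | nil => exact ⟨0, by simp, Or.inl rfl⟩
  | cons x d' ih =>
    obtain ⟨r, hr, hcase⟩ := ih (fun y hy => hd y (List.mem_cons_of_mem x hy))
    have hx : x = i ∨ x = j := hd x List.mem_cons_self
    rw [wordProd_cons]
    rcases hcase with h | h
    · rw [h]
      obtain ⟨r', hr', hc⟩ := E.mul_alt cs i j x hx r
      refine ⟨r', ?_, hc⟩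
      simp only [List.length_cons]
      omega
    · rw [h]
      obtain ⟨r', hr', hc⟩ := E.mul_alt cs j i x (Or.symm hx) r
      refine ⟨r', ?_, Or.symm hc⟩
      simp only [List.length_cons]
      omega

theorem tau_nonneg_aux : ∀ n (w : W), cs.length w ≤ n → ∀ i, ¬cs.IsRightDescent w i →
    ∀ t, 0 ≤ E.tau cs w (Pi.single i 1 : ι → ℝ) t := by
  intro n
  induction n with
  | zero =>
    intro w hw i _ t
    have hw1 : w = 1 := cs.length_eq_zero_iff.mp (Nat.le_zero.mp hw)
    subst hw1
    rw [map_one, Module.End.one_apply]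
    rw [Pi.single_apply]
    split <;> norm_num
  | succ n ih =>
    intro w hw i hi t
    by_cases hw1 : w = 1
    · subst hw1
      rw [map_one, Module.End.one_apply, Pi.single_apply]
      split <;> norm_num
    obtain ⟨j, hj⟩ := cs.exists_rightDescent_of_ne_one hw1
    have hij : i ≠ j := fun h => hi (h ▸ hj)
    obtain ⟨v, d, hd, hwd, hlen, hvi, hvj⟩ := E.strip cs i j w
    have hdne : d ≠ [] := by
      intro h0
      have hwv : w = v := by rw [hwd, h0, wordProd_nil, mul_one]
      exact hvj (hwv ▸ hj)
    obtain ⟨r, hrle, hform⟩ := E.dihedral_reduce cs i j d hd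
    have hy_le : cs.length (cs.wordProd d) ≤ r := by
      rcases hform with h | h <;>
      · rw [h]
        calc cs.length (cs.wordProd _) ≤ _ := cs.length_wordProd_le _
          _ = r := length_alternatingWord _ _ _
    have hw_le : cs.length w ≤ cs.length v + cs.length (cs.wordProd d) := by
      rw [hwd]; exact cs.length_mul_le v _
    have hdr : d.length = r ∧ cs.length (cs.wordProd d) = r := by omega
    obtain ⟨hdr1, hdr2⟩ := hdr
    have hr1 : 1 ≤ r := by
      have := List.length_pos_iff.mpr hdne
      omega
    have hwsi : cs.length (w * cs.simple i) = cs.length w + 1 :=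
      cs.not_isRightDescent_iff.mp hi
    have hysi : r + 1 ≤ cs.length (cs.wordProd d * cs.simple i) := by
      have hassoc : w * cs.simple i = v * (cs.wordProd d * cs.simple i) := by
        rw [hwd, mul_assoc]
      have h2 := cs.length_mul_le v (cs.wordProd d * cs.simple i)
      rw [← hassoc, hwsi] at h2
      omega
    -- a helper to derive a contradiction when the dihedral part ends with i
    have hcontra : cs.wordProd d ≠ cs.wordProd (alternatingWord j i r) := by
      intro h
      obtain ⟨r₀, rfl⟩ : ∃ r₀, r = r₀ + 1 := ⟨r - 1, by omega⟩
      have hconcat : alternatingWord j i (r₀+1) = (alternatingWord i j r₀).concat i :=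
        alternatingWord_succ j i r₀
      have hcon : cs.wordProd d * cs.simple i = cs.wordProd (alternatingWord i j r₀) := by
        rw [h, hconcat, wordProd_concat, simple_mul_simple_cancel_right]
      have hle := cs.length_wordProd_le (alternatingWord i j r₀)
      rw [← hcon, length_alternatingWord] at hle
      omega
    have hform' : cs.wordProd d = cs.wordProd (alternatingWord i j r) := by
      rcases hform with h | h
      · exact h
      · exact absurd h hcontra
    have hrbound : E.m i j = 0 ∨ r < E.m i j := by
      by_cases hm0 : E.m i j = 0
      · exact Or.inl hm0
      · right
        have hrle_m : r ≤ E.m i j := by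
          by_contra hgt
          push_neg at hgt
          have hnred := cs.not_isReduced_alternatingWord i j
            (show E.cox i j ≠ 0 from hm0) (show r > E.cox i j from hgt)
          apply hnred
          show cs.length (cs.wordProd (alternatingWord i j r)) = _
          rw [← hform', length_alternatingWord, hdr2]
        rcases lt_or_eq_of_le hrle_m with h | h
        · exact h
        · exfalso
          -- r = m : use the braid relation
          have hbraid := cs.wordProd_braidWord_eq i j
          have hsymm : E.cox j i = E.cox i j := by
            rw [cox_apply, cox_apply, E.m_symm]
          have hb2 : cs.wordProd (alternatingWord i j r)
              = cs.wordProd (alternatingWord j i r) := by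
            have : E.cox i j = r := h.symm
            rw [← this]
            rw [show alternatingWord j i (E.cox i j) = alternatingWord j i (E.cox j i) by
              rw [hsymm]]
            exact hbraid
          exact hcontra (hform'.trans hb2)
    obtain ⟨a, b, ha, hb, hab⟩ := E.alt_pos cs i j hij r hrbound
    have hτ : E.tau cs w (Pi.single i 1 : ι → ℝ)
        = a • (E.tau cs v (Pi.single i 1 : ι → ℝ))
          + b • (E.tau cs v (Pi.single j 1 : ι → ℝ)) := by
      rw [hwd, map_mul, Module.End.mul_apply, hform', hab, map_add, map_smul, map_smul]
    rw [hτ]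
    have hvn : cs.length v ≤ n := by omega
    have h1 := ih v hvn i hvi t
    have h2 := ih v hvn j hvj t
    simp only [Pi.add_apply, Pi.smul_apply, smul_eq_mul]
    exact add_nonneg (mul_nonneg ha h1) (mul_nonneg hb h2)

theorem tau_nonneg {w : W} {i : ι} (h : ¬cs.IsRightDescent w i) :
    ∀ t, 0 ≤ E.tau cs w (Pi.single i 1 : ι → ℝ) t :=
  E.tau_nonneg_aux cs (cs.length w) w le_rfl i h

theorem tau_single_self (i : ι) :
    E.S i (Pi.single i 1 : ι → ℝ) = -(Pi.single i 1 : ι → ℝ) := by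
  rw [S_single, E.diag i]
  ext t
  simp only [Pi.sub_apply, Pi.smul_apply, Pi.neg_apply, smul_eq_mul]
  ring

theorem tau_nonpos {w : W} {i : ι} (h : cs.IsRightDescent w i) :
    ∀ t, E.tau cs w (Pi.single i 1 : ι → ℝ) t ≤ 0 := by
  intro t
  have hnd : ¬cs.IsRightDescent (w * cs.simple i) i :=
    (cs.isRightDescent_iff_not_isRightDescent_mul).mp h
  have hwe : w = (w * cs.simple i) * cs.simple i := by
    rw [simple_mul_simple_cancel_right]
  have : E.tau cs w (Pi.single i 1 : ι → ℝ)
      = E.tau cs (w * cs.simple i) (E.S i (Pi.single i 1 : ι → ℝ)) := by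
    conv_lhs => rw [hwe]
    rw [map_mul, Module.End.mul_apply, tau_simple]
  rw [this, tau_single_self, map_neg]
  have := E.tau_nonneg cs hnd t
  simp only [Pi.neg_apply]
  linarith

theorem isRightDescent_iff_tau_nonpos (w : W) (i : ι) :
    cs.IsRightDescent w i ↔ ∀ t, E.tau cs w (Pi.single i 1 : ι → ℝ) t ≤ 0 := by
  constructor
  · exact fun h => E.tau_nonpos cs h
  · intro h
    by_contra hnd
    have hge := E.tau_nonneg cs hnd
    have hzero : E.tau cs w (Pi.single i 1 : ι → ℝ) = 0 := by
      ext t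
      exact le_antisymm (h t) (hge t)
    have hone : (Pi.single i 1 : ι → ℝ) = 0 := by
      have h2 : E.tau cs w⁻¹ (E.tau cs w (Pi.single i 1 : ι → ℝ))
          = (Pi.single i 1 : ι → ℝ) := by
        rw [← Module.End.mul_apply, ← map_mul, inv_mul_cancel, map_one, Module.End.one_apply]
      rw [hzero, map_zero] at h2
      exact h2.symm
    have := congrFun hone i
    simp at this

end EGCM

namespace EGCM

open CoxeterSystem

variable {ι : Type*} [Fintype ι] [DecidableEq ι] (E : EGCM ι)
variable {W : Type*} [Group W] (cs : CoxeterSystem E.cox W)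

/-- The position after playing a word with product `u`, expressed via the representation. -/
noncomputable def posOf (lam : ι → ℝ) (u : W) : ι → ℝ :=
  fun k => ∑ t, lam t * (E.tau cs u⁻¹ (Pi.single k 1 : ι → ℝ)) t

theorem posOf_one (lam : ι → ℝ) : E.posOf cs lam 1 = lam := by
  ext k
  unfold posOf
  rw [inv_one, map_one]
  simp only [Module.End.one_apply]
  rw [Finset.sum_eq_single k]
  · simp
  · intro t _ ht
    simp [Pi.single_apply, ht]
  · simp

theorem pair_fire (lam : ι → ℝ) (x : ι) (v : ι → ℝ) :
    ∑ t, (E.fire lam x) t * v t = ∑ t, lam t * (E.S x v) t := by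
  rw [S_apply]
  have h1 : ∀ t, (E.fire lam x) t * v t = lam t * v t - (E.M x t * v t) * lam x := by
    intro t
    unfold fire
    ring
  have h2 : ∀ t, lam t * (v - (∑ k, E.M x k * v k) • (Pi.single x 1 : ι → ℝ)) t
      = lam t * v t - lam t * ((∑ k, E.M x k * v k) * (Pi.single x 1 : ι → ℝ) t) := by
    intro t
    simp only [Pi.sub_apply, Pi.smul_apply, smul_eq_mul]
    ring
  rw [Finset.sum_congr rfl (fun t _ => h1 t), Finset.sum_congr rfl (fun t _ => h2 t)]
  rw [Finset.sum_sub_distrib, Finset.sum_sub_distrib]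
  congr 1
  have h3 : ∑ t, lam t * ((∑ k, E.M x k * v k) * (Pi.single x 1 : ι → ℝ) t)
      = lam x * (∑ k, E.M x k * v k) := by
    rw [Finset.sum_eq_single x (fun t _ ht => by simp [Pi.single_apply, ht]) (by simp)]
    simp
  rw [h3, ← Finset.sum_mul]
  ring

theorem fire_posOf (lam : ι → ℝ) (u : W) (x : ι) :
    E.fire (E.posOf cs lam u) x = E.posOf cs lam (cs.simple x * u) := by
  ext k
  have h1 : ∀ k', E.posOf cs lam u k' = ∑ t, lam t * (E.tau cs u⁻¹ (Pi.single k' 1 : ι → ℝ)) t :=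
    fun _ => rfl
  show E.posOf cs lam u k - E.M x k * E.posOf cs lam u x = _
  rw [h1, h1]
  have key : E.posOf cs lam (cs.simple x * u) k
      = ∑ t, lam t * (E.tau cs u⁻¹ (E.S x (Pi.single k 1 : ι → ℝ))) t := by
    unfold posOf
    rw [mul_inv_rev, cs.inv_simple, map_mul, Module.End.mul_apply, tau_simple]
  rw [key, S_single, map_sub, map_smul]
  simp only [Pi.sub_apply, Pi.smul_apply, smul_eq_mul]
  rw [Finset.sum_congr rfl (fun t _ => by ring :
    ∀ t ∈ Finset.univ, lam t * ((E.tau cs u⁻¹ (Pi.single k 1 : ι → ℝ)) t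
      - E.M x k * (E.tau cs u⁻¹ (Pi.single x 1 : ι → ℝ)) t)
      = lam t * (E.tau cs u⁻¹ (Pi.single k 1 : ι → ℝ)) t
        - E.M x k * (lam t * (E.tau cs u⁻¹ (Pi.single x 1 : ι → ℝ)) t))]
  rw [Finset.sum_sub_distrib, ← Finset.mul_sum]

theorem fireList_posOf (lam : ι → ℝ) : ∀ (c : List ι) (u : W),
    E.fireList (E.posOf cs lam u) c = E.posOf cs lam (cs.wordProd c.reverse * u) := by
  intro c
  induction c with
  | nil => intro u; simp [fireList, wordProd_nil]
  | cons x c' ih =>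
    intro u
    show E.fireList (E.fire (E.posOf cs lam u) x) c' = _
    rw [E.fire_posOf cs lam u x, ih (cs.simple x * u)]
    congr 1
    rw [List.reverse_cons, wordProd_append, wordProd_singleton, mul_assoc]

theorem fireList_eq_posOf (lam : ι → ℝ) (c : List ι) :
    E.fireList lam c = E.posOf cs lam (cs.wordProd c.reverse) := by
  conv_lhs => rw [← E.posOf_one cs lam]
  rw [E.fireList_posOf cs lam c 1, mul_one]

/-- Strict positivity at a node which extends reducedly inside an element of `W^J`. -/
theorem dagger {J : Set ι} {lam : ι → ℝ} (hlam : JcDominant J lam) {w : W}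
    (hw : w ∈ minReps cs J) (u : W) (k : ι)
    (hku : cs.length (cs.simple k * u) = cs.length u + 1)
    (hsplit : cs.length (w * (cs.simple k * u)⁻¹) + 1 + cs.length u = cs.length w) :
    0 < E.posOf cs lam u k := by
  set β := E.tau cs u⁻¹ (Pi.single k 1 : ι → ℝ) with hβdef
  have hnd : ¬cs.IsRightDescent u⁻¹ k := by
    rw [cs.not_isRightDescent_iff]
    have h1 : (u⁻¹ * cs.simple k)⁻¹ = cs.simple k * u := by
      rw [mul_inv_rev, inv_inv, cs.inv_simple]
    rw [← cs.length_inv (u⁻¹ * cs.simple k), h1, hku, cs.length_inv]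
  have hβ : ∀ t, 0 ≤ β t := E.tau_nonneg cs hnd
  have hlnn : ∀ t, 0 ≤ lam t := by
    intro t
    by_cases ht : t ∈ J
    · rw [hlam.1 t ht]
    · exact le_of_lt (hlam.2 t ht)
  have hsum_nn : 0 ≤ ∑ t, lam t * β t :=
    Finset.sum_nonneg (fun t _ => mul_nonneg (hlnn t) (hβ t))
  have hgoal : E.posOf cs lam u k = ∑ t, lam t * β t := rfl
  rw [hgoal]
  rcases lt_or_eq_of_le hsum_nn with h | h
  · exact h
  exfalso
  -- the sum is zero, so β is supported on J
  have hterms : ∀ t ∈ Finset.univ, lam t * β t = 0 := by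
    rw [← Finset.sum_eq_zero_iff_of_nonneg
      (fun t _ => mul_nonneg (hlnn t) (hβ t))]
    exact h.symm
  have hsupp : ∀ t, t ∉ J → β t = 0 := by
    intro t ht
    have := hterms t (Finset.mem_univ t)
    rcases mul_eq_zero.mp this with h' | h'
    · exact absurd h' (ne_of_gt (hlam.2 t ht))
    · exact h'
  -- τ(w) β is pointwise ≤ 0
  set V := w * (cs.simple k * u)⁻¹ with hVdef
  have hVk : w * u⁻¹ = V * cs.simple k := by
    rw [hVdef, mul_inv_rev, cs.inv_simple, mul_assoc, mul_assoc,
      simple_mul_simple_self, mul_one]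
  have hVlen : cs.length (V * cs.simple k) = cs.length V + 1 := by
    have h1 : cs.length w ≤ cs.length (V * cs.simple k) + cs.length u := by
      have : w = (V * cs.simple k) * u := by
        rw [← hVk, mul_assoc, inv_mul_cancel, mul_one]
      rw [this]
      exact cs.length_mul_le _ _
    have h2 : cs.length (V * cs.simple k) ≤ cs.length V + 1 := by
      have := cs.length_mul_le V (cs.simple k)
      rwa [cs.length_simple] at this
    omega
  have hVnd : ¬cs.IsRightDescent V k := by
    rw [cs.not_isRightDescent_iff]
    exact hVlen
  have hτV := E.tau_nonneg cs hVnd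
  have hτwβ_nonpos : ∀ t, E.tau cs w β t ≤ 0 := by
    have hcalc : E.tau cs w β = -(E.tau cs V (Pi.single k 1 : ι → ℝ)) := by
      rw [hβdef, ← Module.End.mul_apply, ← map_mul, hVk, map_mul, Module.End.mul_apply,
        tau_simple, tau_single_self, map_neg]
    intro t
    rw [hcalc]
    simp only [Pi.neg_apply]
    linarith [hτV t]
  -- τ(w) β is pointwise ≥ 0
  have hβsum : β = ∑ t, (β t) • (Pi.single t 1 : ι → ℝ) := by
    ext s
    rw [Finset.sum_apply]
    rw [Finset.sum_eq_single s (fun t _ ht => by simp [Pi.single_apply, Ne.symm ht]) (by simp)]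
    simp
  have hτwβ_nonneg : ∀ t, 0 ≤ E.tau cs w β t := by
    intro t
    rw [hβsum, map_sum]
    rw [Finset.sum_apply]
    apply Finset.sum_nonneg
    intro s _
    rw [map_smul]
    simp only [Pi.smul_apply, smul_eq_mul]
    by_cases hs : s ∈ J
    · have hwnd : ¬cs.IsRightDescent w s := by
        have := hw s hs
        unfold CoxeterSystem.IsRightDescent
        omega
      exact mul_nonneg (hβ s) (E.tau_nonneg cs hwnd t)
    · rw [hsupp s hs, zero_mul]
  have hτwβ0 : E.tau cs w β = 0 := by
    ext t
    exact le_antisymm (hτwβ_nonpos t) (hτwβ_nonneg t)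
  have hβ0 : β = 0 := by
    have h2 : E.tau cs w⁻¹ (E.tau cs w β) = β := by
      rw [← Module.End.mul_apply, ← map_mul, inv_mul_cancel, map_one, Module.End.one_apply]
    rw [hτwβ0, map_zero] at h2
    exact h2.symm
  have hsingle0 : (Pi.single k 1 : ι → ℝ) = 0 := by
    have h2 : E.tau cs u (E.tau cs u⁻¹ (Pi.single k 1 : ι → ℝ))
        = (Pi.single k 1 : ι → ℝ) := by
      rw [← Module.End.mul_apply, ← map_mul, mul_inv_cancel, map_one, Module.End.one_apply]
    rw [← hβdef, hβ0, map_zero] at h2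
    exact h2.symm
  have := congrFun hsingle0 k
  simp at this

/-- Every reduced play of a "reduced right chunk" of `w ∈ W^J` is legal. -/
theorem legal_of_reduced {J : Set ι} {lam : ι → ℝ} (hlam : JcDominant J lam) {w : W}
    (hw : w ∈ minReps cs J) : ∀ (l : List ι), cs.IsReduced l.reverse → ∀ (v'' u : W),
    w = v'' * cs.wordProd l.reverse * u →
    cs.length w = cs.length v'' + l.length + cs.length u →
    E.Legal (E.posOf cs lam u) l := by
  intro l
  induction l with
  | nil => intro _ _ _ _ _; trivial
  | cons k d ih =>
    intro hred v'' u hdecomp hlen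
    have hrev : (k :: d).reverse = d.reverse ++ [k] := by simp
    have hπ : cs.wordProd (k :: d).reverse = cs.wordProd d.reverse * cs.simple k := by
      rw [hrev, wordProd_append, wordProd_singleton]
    have hlend : cs.length (cs.wordProd d.reverse) ≤ d.length := by
      have := cs.length_wordProd_le d.reverse
      simpa using this
    have hredl : cs.length (cs.wordProd (k :: d).reverse) = d.length + 1 := by
      have := hred
      unfold CoxeterSystem.IsReduced at this
      rw [this]
      simp
    -- length bookkeeping
    have hsku_ub : cs.length (cs.simple k * u) ≤ cs.length u + 1 := by
      have := cs.length_mul_le (cs.simple k) u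
      rw [cs.length_simple] at this
      omega
    have hwsplit : w = (v'' * cs.wordProd d.reverse) * (cs.simple k * u) := by
      rw [hdecomp, hπ]
      group
    have hw_ub : cs.length w ≤ cs.length v'' + d.length + cs.length (cs.simple k * u) := by
      calc cs.length w ≤ cs.length (v'' * cs.wordProd d.reverse)
            + cs.length (cs.simple k * u) := by rw [hwsplit]; exact cs.length_mul_le _ _
        _ ≤ (cs.length v'' + cs.length (cs.wordProd d.reverse))
            + cs.length (cs.simple k * u) := by
            have := cs.length_mul_le v'' (cs.wordProd d.reverse)
            omega
        _ ≤ cs.length v'' + d.length + cs.length (cs.simple k * u) := by omega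
    have hsku : cs.length (cs.simple k * u) = cs.length u + 1 := by
      simp only [List.length_cons] at hlen
      omega
    -- the dagger condition
    have hVlen : cs.length (w * (cs.simple k * u)⁻¹) + 1 + cs.length u = cs.length w := by
      have hVeq : w * (cs.simple k * u)⁻¹ = v'' * cs.wordProd d.reverse := by
        rw [hwsplit]
        group
      have hub : cs.length (w * (cs.simple k * u)⁻¹)
          ≤ cs.length v'' + d.length := by
        rw [hVeq]
        have := cs.length_mul_le v'' (cs.wordProd d.reverse)
        omega
      have hlb : cs.length w ≤ cs.length (w * (cs.simple k * u)⁻¹)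
          + cs.length (cs.simple k * u) := by
        have h3 := cs.length_mul_le (w * (cs.simple k * u)⁻¹) (cs.simple k * u)
        rw [inv_mul_cancel_right] at h3
        exact h3
      simp only [List.length_cons] at hlen
      omega
    have hpos := E.dagger cs hlam hw u k hsku hVlen
    refine ⟨hpos, ?_⟩
    rw [E.fire_posOf cs lam u k]
    -- apply the induction hypothesis
    have hredd : cs.IsReduced d.reverse := by
      have h1 : d.reverse = ((k :: d).reverse).take d.length := by
        rw [hrev]
        rw [List.take_left' (by simp)]
      rw [h1]
      exact hred.take d.length
    apply ih hredd v'' (cs.simple k * u)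
    · rw [hwsplit]
    · simp only [List.length_cons] at hlen
      omega

theorem legal_append_right (lam : ι → ℝ) : ∀ (c d : List ι),
    E.Legal lam c → E.Legal (E.fireList lam c) d → E.Legal lam (c ++ d) := by
  intro c
  induction c generalizing lam with
  | nil => intro d _ h2; exact h2
  | cons x c' ih =>
    intro d h1 h2
    obtain ⟨hx, hrest⟩ := h1
    exact ⟨hx, ih (E.fire lam x) d hrest h2⟩

end EGCM

namespace EGCM

open CoxeterSystem

variable {ι : Type*} [Fintype ι] [DecidableEq ι] (E : EGCM ι)
variable {W : Type*} [Group W] (cs : CoxeterSystem E.cox W)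

theorem commMove_symm : Symmetric (CommMove E) := by
  rintro l l' ⟨u, v, x, y, hm, hl, hl'⟩
  exact ⟨u, v, y, x, by rw [E.m_symm]; exact hm, hl', hl⟩

theorem rtg_symm {l l' : List ι} (h : Relation.ReflTransGen (CommMove E) l l') :
    Relation.ReflTransGen (CommMove E) l' l :=
  haveI : Std.Symm (CommMove E) := ⟨fun _ _ hab => E.commMove_symm hab⟩; Std.Symm.symm _ _ h

theorem rtg_cons (x : ι) {a b : List ι} (h : Relation.ReflTransGen (CommMove E) a b) :
    Relation.ReflTransGen (CommMove E) (x :: a) (x :: b) := by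
  refine Relation.ReflTransGen.lift (fun c => x :: c) ?_ _ _ h
  rintro c d ⟨u, v, p, q, hm, hc, hd⟩
  exact ⟨x :: u, v, p, q, hm, by rw [hc]; rfl, by rw [hd]; rfl⟩

theorem main_comm {J : Set ι} {lam : ι → ℝ} (hlam : JcDominant J lam)
    (hAF : E.AdjacencyFree lam) {w : W} (hw : w ∈ minReps cs J) :
    ∀ n (v u : W), cs.length v ≤ n → w = v * u →
    cs.length w = cs.length v + cs.length u →
    ∀ l l' : List ι, cs.IsReduced l.reverse → cs.wordProd l.reverse = v →
      cs.IsReduced l'.reverse → cs.wordProd l'.reverse = v →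
      Relation.ReflTransGen (CommMove E) l l' := by
  intro n
  induction n with
  | zero =>
    intro v u hvn _ _ l l' hr hp hr' hp'
    have hlv : cs.length v = l.length := by
      rw [← hp]
      unfold CoxeterSystem.IsReduced at hr
      rw [hr, List.length_reverse]
    have hlv' : cs.length v = l'.length := by
      rw [← hp']
      unfold CoxeterSystem.IsReduced at hr'
      rw [hr', List.length_reverse]
    have hl0 : l = [] := List.length_eq_zero_iff.mp (by omega)
    have hl0' : l' = [] := List.length_eq_zero_iff.mp (by omega)
    rw [hl0, hl0']
  | succ n ih =>
    intro v u hvn hvu hlen l l' hr hp hr' hp'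
    have hlv : cs.length v = l.length := by
      rw [← hp]
      unfold CoxeterSystem.IsReduced at hr
      rw [hr, List.length_reverse]
    have hlv' : cs.length v = l'.length := by
      rw [← hp']
      unfold CoxeterSystem.IsReduced at hr'
      rw [hr', List.length_reverse]
    match l, hr, hp, hlv with
    | [], hr, hp, hlv =>
      have hl0' : l' = [] := List.length_eq_zero_iff.mp (by
        simp only [List.length_nil] at hlv
        omega)
      rw [hl0']
    | x :: t, hr, hp, hlv =>
    match l', hr', hp', hlv' with
    | [], hr', hp', hlv' =>
      exfalso
      simp only [List.length_nil, List.length_cons] at hlv hlv'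
      omega
    | y :: t', hr', hp', hlv' =>
    -- facts about the first word
    have hπl : cs.wordProd t.reverse * cs.simple x = v := by
      rw [← hp]
      simp [List.reverse_cons, wordProd_append]
    have hredt : cs.IsReduced t.reverse := by
      have h1 : t.reverse = ((x :: t).reverse).take t.length := by
        rw [List.reverse_cons]
        exact (List.take_left' (by simp)).symm
      rw [h1]
      exact hr.take t.length
    have hlvt : cs.length (cs.wordProd t.reverse) = t.length := by
      unfold CoxeterSystem.IsReduced at hredt
      rw [hredt, List.length_reverse]
    have hvsx : v * cs.simple x = cs.wordProd t.reverse := by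
      rw [← hπl, simple_mul_simple_cancel_right]
    have hlcons : cs.length v = t.length + 1 := by simp at hlv; omega
    have hsxu : cs.length (cs.simple x * u) = cs.length u + 1 := by
      have h1 : w = (v * cs.simple x) * (cs.simple x * u) := by
        rw [hvu, mul_assoc, simple_mul_simple_cancel_left]
      have h2 := cs.length_mul_le (v * cs.simple x) (cs.simple x * u)
      rw [← h1] at h2
      have h3 := cs.length_mul_le (cs.simple x) u
      rw [cs.length_simple] at h3
      rw [hvsx, hlvt] at h2
      omega
    have hwsplit : w = (v * cs.simple x) * (cs.simple x * u) := by
      rw [hvu, mul_assoc, simple_mul_simple_cancel_left]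
    have hlensplit : cs.length w = cs.length (v * cs.simple x)
        + cs.length (cs.simple x * u) := by
      rw [hvsx, hlvt, hsxu]
      omega
    -- facts about the second word
    have hπl' : cs.wordProd t'.reverse * cs.simple y = v := by
      rw [← hp']
      simp [List.reverse_cons, wordProd_append]
    have hredt' : cs.IsReduced t'.reverse := by
      have h1 : t'.reverse = ((y :: t').reverse).take t'.length := by
        rw [List.reverse_cons]
        exact (List.take_left' (by simp)).symm
      rw [h1]
      exact hr'.take t'.length
    have hlvt' : cs.length (cs.wordProd t'.reverse) = t'.length := by
      unfold CoxeterSystem.IsReduced at hredt'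
      rw [hredt', List.length_reverse]
    have hvsy : v * cs.simple y = cs.wordProd t'.reverse := by
      rw [← hπl', simple_mul_simple_cancel_right]
    have hlcons' : cs.length v = t'.length + 1 := by simp at hlv'; omega
    have hsyu : cs.length (cs.simple y * u) = cs.length u + 1 := by
      have h1 : w = (v * cs.simple y) * (cs.simple y * u) := by
        rw [hvu, mul_assoc, simple_mul_simple_cancel_left]
      have h2 := cs.length_mul_le (v * cs.simple y) (cs.simple y * u)
      rw [← h1] at h2
      have h3 := cs.length_mul_le (cs.simple y) u
      rw [cs.length_simple] at h3
      rw [hvsy, hlvt'] at h2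
      omega
    have hwsplit' : w = (v * cs.simple y) * (cs.simple y * u) := by
      rw [hvu, mul_assoc, simple_mul_simple_cancel_left]
    have hlensplit' : cs.length w = cs.length (v * cs.simple y)
        + cs.length (cs.simple y * u) := by
      rw [hvsy, hlvt', hsyu]
      omega
    by_cases hxy : x = y
    · subst hxy
      apply E.rtg_cons x
      exact ih (v * cs.simple x) (cs.simple x * u)
        (by rw [hvsx, hlvt]; omega) hwsplit hlensplit t t'
        hredt hvsx.symm hredt' (by rw [← hvsy, hvsx])
    · -- legality and adjacency-freeness
      obtain ⟨ωu, hωu_red, hωu_prod⟩ := cs.exists_reduced_word' u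
      set cl := ωu.reverse with hcl
      have hcl_red : cs.IsReduced cl.reverse := by
        rw [hcl, List.reverse_reverse]
        exact hωu_red
      have hcl_prod : cs.wordProd cl.reverse = u := by
        rw [hcl, List.reverse_reverse]
        exact hωu_prod.symm
      have hllu : cl.length = cs.length u := by
        rw [hcl, List.length_reverse]
        unfold CoxeterSystem.IsReduced at hωu_red
        rw [← hωu_red, ← hωu_prod]
      have hcl_legal : E.Legal lam cl := by
        have h1 := E.legal_of_reduced cs hlam hw cl hcl_red v 1
          (by rw [hcl_prod, mul_one, hvu])
          (by rw [cs.length_one, hllu]; omega)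
        rwa [E.posOf_one cs lam] at h1
      have hμeq : E.fireList lam cl = E.posOf cs lam u := by
        rw [E.fireList_eq_posOf cs lam cl, hcl_prod]
      have hl_legal : E.Legal (E.posOf cs lam u) (x :: t) :=
        E.legal_of_reduced cs hlam hw (x :: t) hr 1 u
          (by rw [one_mul, hp, hvu]) (by rw [cs.length_one]; simp at hlv ⊢; omega)
      have hl'_legal : E.Legal (E.posOf cs lam u) (y :: t') :=
        E.legal_of_reduced cs hlam hw (y :: t') hr' 1 u
          (by rw [one_mul, hp', hvu]) (by rw [cs.length_one]; simp at hlv' ⊢; omega)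
      have hμx : 0 < E.posOf cs lam u x := hl_legal.1
      have hμy : 0 < E.posOf cs lam u y := hl'_legal.1
      have hnadj := hAF cl hcl_legal
      have hMxy : E.M x y = 0 := by
        by_contra hM
        exact hnadj ⟨x, y, ⟨hxy, hM⟩, by rw [hμeq]; exact hμx, by rw [hμeq]; exact hμy⟩
      have hm2 : E.m x y = 2 := (E.m_eq_two_iff hxy).mpr hMxy
      -- commuting simple reflections
      have hcomm : cs.simple x * cs.simple y = cs.simple y * cs.simple x := by
        have h2 := cs.simple_mul_simple_pow x y
        have hcox : E.cox x y = 2 := hm2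
        rw [hcox] at h2
        have h3 : (cs.simple x * cs.simple y) * (cs.simple x * cs.simple y) = 1 := by
          rw [← pow_two]
          exact h2
        have h4 : cs.simple x * cs.simple y = (cs.simple x * cs.simple y)⁻¹ :=
          eq_inv_of_mul_eq_one_left h3
        rw [h4, mul_inv_rev, cs.inv_simple, cs.inv_simple]
      -- y is a right descent of v and of v * s x
      have hvy_desc : cs.IsRightDescent v y := by
        unfold CoxeterSystem.IsRightDescent
        rw [hvsy, hlvt']
        omega
      have hdesc2 : cs.IsRightDescent (v * cs.simple x) y := by
        rw [E.isRightDescent_iff_tau_nonpos]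
        intro tt
        have hSx : E.S x (Pi.single y 1 : ι → ℝ) = (Pi.single y 1 : ι → ℝ) := by
          rw [S_single, hMxy]
          ext s
          simp
        have hcalc : E.tau cs (v * cs.simple x) (Pi.single y 1 : ι → ℝ)
            = E.tau cs v (Pi.single y 1 : ι → ℝ) := by
          rw [map_mul, Module.End.mul_apply, tau_simple, hSx]
        rw [hcalc]
        exact E.tau_nonpos cs hvy_desc tt
      have hlvxy : cs.length (v * cs.simple x * cs.simple y) + 1
          = cs.length (v * cs.simple x) := cs.isRightDescent_iff.mp hdesc2
      -- a reduced play for v * s x * s y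
      obtain ⟨ω2, hω2red, hω2prod⟩ := cs.exists_reduced_word' (v * cs.simple x * cs.simple y)
      set r₀ := ω2.reverse with hr₀
      have hr₀rev : r₀.reverse = ω2 := by rw [hr₀, List.reverse_reverse]
      have hr₀prod : cs.wordProd r₀.reverse = v * cs.simple x * cs.simple y := by
        rw [hr₀rev]
        exact hω2prod.symm
      have hr₀len : r₀.length = cs.length (v * cs.simple x * cs.simple y) := by
        rw [hr₀, List.length_reverse]
        unfold CoxeterSystem.IsReduced at hω2red
        rw [← hω2red, ← hω2prod]
      -- the two middle words
      have hyaprod : cs.wordProd (y :: r₀).reverse = v * cs.simple x := by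
        simp only [List.reverse_cons]
        rw [wordProd_append, wordProd_singleton, hr₀prod,
          simple_mul_simple_cancel_right]
      have e1 : cs.length (v * cs.simple x) = t.length := by
        rw [hvsx]; exact hlvt
      have e1' : cs.length (v * cs.simple y) = t'.length := by
        rw [hvsy]; exact hlvt'
      have e2 : cs.length (v * cs.simple x * cs.simple y) + 1 = t.length := by
        rw [← e1]; exact hlvxy
      have hyared : cs.IsReduced (y :: r₀).reverse := by
        unfold CoxeterSystem.IsReduced
        rw [hyaprod]
        simp only [List.length_reverse, List.length_cons]
        rw [e1, hr₀len]
        omega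
      have hxbprod : cs.wordProd (x :: r₀).reverse = v * cs.simple y := by
        simp only [List.reverse_cons]
        rw [wordProd_append, wordProd_singleton, hr₀prod]
        rw [mul_assoc (v * cs.simple x), ← hcomm, ← mul_assoc,
          simple_mul_simple_cancel_right]
      have hxbred : cs.IsReduced (x :: r₀).reverse := by
        unfold CoxeterSystem.IsReduced
        rw [hxbprod]
        simp only [List.length_reverse, List.length_cons]
        rw [e1', hr₀len]
        omega
      -- assemble
      have h1 : Relation.ReflTransGen (CommMove E) t (y :: r₀) :=
        ih (v * cs.simple x) (cs.simple x * u)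
          (by rw [hvsx, hlvt]; omega) hwsplit hlensplit t (y :: r₀)
          hredt hvsx.symm hyared hyaprod
      have h2 : Relation.ReflTransGen (CommMove E) t' (x :: r₀) :=
        ih (v * cs.simple y) (cs.simple y * u)
          (by rw [hvsy, hlvt']; omega) hwsplit' hlensplit' t' (x :: r₀)
          hredt' hvsy.symm hxbred hxbprod
      have hmove : CommMove E (x :: y :: r₀) (y :: x :: r₀) :=
        ⟨[], r₀, x, y, hm2, rfl, rfl⟩
      have ha : Relation.ReflTransGen (CommMove E) (x :: t) (x :: y :: r₀) :=
        E.rtg_cons x h1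
      have hb : Relation.ReflTransGen (CommMove E) (y :: t') (y :: x :: r₀) :=
        E.rtg_cons y h2
      exact ha.trans ((Relation.ReflTransGen.single hmove).trans (E.rtg_symm hb))

end EGCM

/-- **Proposition 4.2 (1).** If `W_J` is finite and some adjacency-free position is
`Jᶜ`-dominant, then every element of `W^J` is fully commutative. -/
theorem egcm_adjacencyFree_implies_fullyCommutative {ι : Type*} [Fintype ι]
    (E : EGCM ι) {W : Type*} [Group W] (cs : CoxeterSystem E.cox W)
    (J : Set ι) (hfin : Set.Finite (parabolic cs J : Set W))
    (lam : ι → ℝ) (hlam : EGCM.JcDominant J lam) (hAF : E.AdjacencyFree lam) :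
    ∀ w ∈ minReps cs J, FullyCommutative E cs w := by
  intro w hw l l' hred hprod hred' hprod'
  haveI : DecidableEq ι := Classical.decEq ι
  exact E.main_comm cs hlam hAF hw (cs.length w) w 1 le_rfl (mul_one w).symm
    (by rw [cs.length_one]; omega) l l' hred hprod hred' hprod'
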